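/- Let (B_t)_{t≥0} be a standard Brownian motion, i.e. a stochastic process with B_0 = 0 almost surely, almost surely continuous sample paths, independent increments, and B_t − B_s distributed as a centered Gaussian of variance t − s for 0 ≤ s ≤ t. For every η ∈ (0,2) there exists a constant c(η) > 0 such that for all sufficiently large A (in particular for all A ≥ some A₀(η) ≥ e), P( sup_{1 ≤ t ≤ A−1} B_t/√t ≥ √((2−η) log log A) ) ≥ c(η). -/

import Mathlib

open MeasureTheory Filter ProbabilityTheory Real Set
open scoped ENNReal NNReal


lemma std_pdf (y : ℝ) : gaussianPDFReal 0 1 y = (Real.sqrt (2*π))⁻¹ * Real.exp (-y^2/2) := by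
  simp [gaussianPDFReal]

lemma sqrt_two_pi_ge_one : (1:ℝ) ≤ Real.sqrt (2*π) := by
  rw [show (1:ℝ) = Real.sqrt 1 by simp]
  exact Real.sqrt_le_sqrt (by nlinarith [Real.pi_gt_three])

lemma gauss_tail_le {x : ℝ} (hx : 1 ≤ x) :
    gaussianReal 0 1 (Ici x) ≤ ENNReal.ofReal (Real.exp (-x^2/2)) := by
  rw [gaussianReal_apply_eq_integral _ one_ne_zero]
  apply ENNReal.ofReal_le_ofReal
  rw [MeasureTheory.integral_Ici_eq_integral_Ioi]
  have hint : IntegrableOn (fun y => Real.exp (-x^2/2 + x) * Real.exp (-y)) (Ioi x) := by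
    have := (exp_neg_integrableOn_Ioi x (one_pos)).const_mul (Real.exp (-x^2/2 + x))
    simp only [neg_mul, one_mul] at this
    exact this
  calc ∫ y in Ioi x, gaussianPDFReal 0 1 y
      ≤ ∫ y in Ioi x, Real.exp (-x^2/2 + x) * Real.exp (-y) := by
        apply setIntegral_mono_on (integrable_gaussianPDFReal 0 1).integrableOn hint measurableSet_Ioi
        intro y hy
        rw [std_pdf]
        have h1 : (Real.sqrt (2*π))⁻¹ ≤ 1 := by
          rw [inv_le_one_iff₀]; right; exact sqrt_two_pi_ge_one
        have hyx : x ≤ y := le_of_lt hy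
        have h2 : Real.exp (-y^2/2) ≤ Real.exp (-x^2/2 + x) * Real.exp (-y) := by
          rw [← Real.exp_add]
          apply Real.exp_le_exp.2
          nlinarith
        calc (Real.sqrt (2*π))⁻¹ * Real.exp (-y^2/2) ≤ 1 * Real.exp (-y^2/2) := by
              apply mul_le_mul_of_nonneg_right h1 (Real.exp_nonneg _)
          _ = Real.exp (-y^2/2) := one_mul _
          _ ≤ _ := h2
    _ = Real.exp (-x^2/2 + x) * Real.exp (-x) := by
        rw [MeasureTheory.integral_const_mul, integral_exp_neg_Ioi]
    _ = Real.exp (-x^2/2) := by rw [← Real.exp_add]; ring_nf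

lemma gauss_tail_ge {x : ℝ} (hx : 0 ≤ x) :
    ENNReal.ofReal ((Real.sqrt (2*π))⁻¹ * Real.exp (-(x+1)^2/2)) ≤ gaussianReal 0 1 (Ici x) := by
  rw [gaussianReal_apply_eq_integral _ one_ne_zero]
  apply ENNReal.ofReal_le_ofReal
  have hsub : Ioc x (x+1) ⊆ Ici x := fun y hy => le_of_lt hy.1
  calc (Real.sqrt (2*π))⁻¹ * Real.exp (-(x+1)^2/2)
      = ∫ _ in Ioc x (x+1), (Real.sqrt (2*π))⁻¹ * Real.exp (-(x+1)^2/2) := by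
        rw [setIntegral_const]
        simp [Real.volume_Ioc]
    _ ≤ ∫ y in Ioc x (x+1), gaussianPDFReal 0 1 y := by
        apply setIntegral_mono_on (integrable_const _) ((integrable_gaussianPDFReal 0 1).integrableOn) measurableSet_Ioc
        intro y hy
        rw [std_pdf]
        apply mul_le_mul_of_nonneg_left _ (by positivity)
        apply Real.exp_le_exp.2
        have h1 : x < y := hy.1
        have h2 : y ≤ x + 1 := hy.2
        nlinarith
    _ ≤ ∫ y in Ici x, gaussianPDFReal 0 1 y := by
        apply setIntegral_mono_set (integrable_gaussianPDFReal 0 1).integrableOn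
          (ae_of_all _ fun y => gaussianPDFReal_nonneg 0 1 y) (HasSubset.Subset.eventuallyLE hsub)

lemma gauss_eq_map {v : ℝ≥0} (hv : v ≠ 0) :
    gaussianReal 0 v = (gaussianReal 0 1).map (fun y => Real.sqrt v * y) := by
  have h := gaussianReal_map_const_mul (μ := 0) (v := 1) (Real.sqrt v)
  have hv2 : (⟨(Real.sqrt v)^2, sq_nonneg _⟩ : ℝ≥0) * 1 = v := by
    ext
    simp [Real.sq_sqrt v.coe_nonneg]
  rw [mul_zero] at h
  rw [h]; congr 1; ext; simp [Real.sq_sqrt v.coe_nonneg]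

lemma gauss_eq_map_neg {v : ℝ≥0} (hv : v ≠ 0) :
    gaussianReal 0 v = (gaussianReal 0 1).map (fun y => -Real.sqrt v * y) := by
  have h := gaussianReal_map_const_mul (μ := 0) (v := 1) (-Real.sqrt v)
  have hv2 : (⟨(-Real.sqrt v)^2, sq_nonneg _⟩ : ℝ≥0) * 1 = v := by
    ext
    simp [neg_pow, Real.sq_sqrt v.coe_nonneg]
  rw [mul_zero] at h
  rw [h]; congr 1; ext; simp [neg_pow, Real.sq_sqrt v.coe_nonneg]

lemma gauss_scale_Ici {v : ℝ≥0} (hv : v ≠ 0) (x : ℝ) :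
    gaussianReal 0 v (Ici (x * Real.sqrt v)) = gaussianReal 0 1 (Ici x) := by
  have hs : (0:ℝ) < Real.sqrt v := Real.sqrt_pos.2 (by exact_mod_cast hv.bot_lt)
  rw [gauss_eq_map hv, Measure.map_apply (measurable_const_mul _) measurableSet_Ici]
  congr 1
  ext y
  simp only [mem_preimage, mem_Ici]
  rw [mul_comm x, mul_le_mul_iff_right₀ hs]

lemma gauss_scale_Iic {v : ℝ≥0} (hv : v ≠ 0) (x : ℝ) :
    gaussianReal 0 v (Iic (-(x * Real.sqrt v))) = gaussianReal 0 1 (Ici x) := by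
  have hs : (0:ℝ) < Real.sqrt v := Real.sqrt_pos.2 (by exact_mod_cast hv.bot_lt)
  rw [gauss_eq_map_neg hv, Measure.map_apply (measurable_const_mul _) measurableSet_Iic]
  congr 1
  ext y
  simp only [mem_preimage, mem_Iic, mem_Ici, neg_mul]
  rw [neg_le_neg_iff, mul_comm x, mul_le_mul_iff_right₀ hs]

lemma sqrt_tendsto : Tendsto Real.sqrt atTop atTop := by
  apply tendsto_atTop_atTop.2
  intro b
  exact ⟨b^2, fun a ha => le_trans (by rw [Real.sqrt_sq_eq_abs]; exact le_abs_self b)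
    (Real.sqrt_le_sqrt ha)⟩

lemma exists_q {η : ℝ} (hη0 : 0 < η) (hη2 : η < 2) :
    ∃ q : ℝ, 4 ≤ q ∧ (Real.sqrt (2-η) + 2/Real.sqrt q)^2 ≤ (2 - η/2) * (1 - 1/q) := by
  have h2 : Tendsto (fun q : ℝ => 2 / Real.sqrt q) atTop (nhds 0) :=
    tendsto_const_nhds.div_atTop sqrt_tendsto
  have h3 : Tendsto (fun q : ℝ => (Real.sqrt (2-η) + 2/Real.sqrt q)^2) atTop
      (nhds ((Real.sqrt (2-η) + 0)^2)) := ((tendsto_const_nhds.add h2).pow 2)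
  have h4 : Tendsto (fun q : ℝ => (2 - η/2) * (1 - 1/q)) atTop (nhds ((2-η/2) * (1 - 0))) := by
    apply tendsto_const_nhds.mul
    apply tendsto_const_nhds.sub
    exact (tendsto_inv_atTop_zero : Tendsto (fun q:ℝ => q⁻¹) atTop (nhds 0)).congr (fun q => (one_div q).symm)
  have hlt : (Real.sqrt (2-η) + 0)^2 < (2 - η/2) * (1 - 0) := by
    rw [add_zero, Real.sq_sqrt (by linarith)]
    linarith
  have := (h3.eventually_lt h4 hlt).and (eventually_ge_atTop (4:ℝ))
  obtain ⟨q, hq1, hq2⟩ := this.exists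
  exact ⟨q, hq2, le_of_lt hq1⟩

/-- A standard Brownian motion: `B 0 = 0` a.s., a.s. continuous paths on `[0,∞)`,
independent increments, and Gaussian increments `B t - B s ~ N(0, t - s)` for `0 ≤ s ≤ t`. -/
structure IsStandardBM {Ω : Type*} [MeasurableSpace Ω] (P : Measure Ω)
    (B : ℝ → Ω → ℝ) : Prop where
  meas : ∀ t, Measurable (B t)
  start : ∀ᵐ ω ∂P, B 0 ω = 0
  cont : ∀ᵐ ω ∂P, ContinuousOn (fun t => B t ω) (Set.Ici 0)
  indep : ∀ (n : ℕ) (t : ℕ → ℝ), (∀ i, 0 ≤ t i) → Monotone t →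
    iIndepFun
      (fun i : Fin n => fun ω => B (t (i.1 + 1)) ω - B (t i.1) ω) P
  incr : ∀ s t : ℝ, 0 ≤ s → s ≤ t →
    Measure.map (fun ω => B t ω - B s ω) P = gaussianReal 0 ((t - s).toNNReal)


lemma exp_neg_two_le : Real.exp (-2 : ℝ) ≤ 1/4 := by
  have he2 : Real.exp 2 = Real.exp 1 * Real.exp 1 := by
    rw [← Real.exp_add]; norm_num
  have h4 : (4:ℝ) ≤ Real.exp 2 := by nlinarith [Real.exp_one_gt_d9]
  have hmul : Real.exp (-2:ℝ) * Real.exp 2 = 1 := by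
    rw [← Real.exp_add]; norm_num
  nlinarith [(Real.exp_pos (-2:ℝ)).le]

lemma tail_m_bound {η s : ℝ} (hη0 : 0 < η) (hη2 : η < 2) (hs0 : 0 < s)
    (h24 : 24/η ≤ s) (h576 : 576/η^2 ≤ s) :
    ENNReal.ofReal (Real.exp (-(1-η/8)*s)) ≤
      gaussianReal 0 1 (Ici (Real.sqrt ((2-η/2)*s))) := by
  set m : ℝ := Real.sqrt ((2-η/2)*s) with hm_def
  have hm0 : 0 ≤ m := Real.sqrt_nonneg _
  have hsqrts : 24/η ≤ Real.sqrt s := by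
    rw [Real.le_sqrt (by positivity) hs0.le]
    calc (24/η)^2 = 576/η^2 := by rw [div_pow]; norm_num
      _ ≤ s := h576
  have f0 : 0 ≤ Real.sqrt s * (Real.sqrt s - 24/η) :=
    mul_nonneg (Real.sqrt_nonneg s) (by linarith)
  have hsq_s : Real.sqrt s * Real.sqrt s = s := Real.mul_self_sqrt hs0.le
  have h24' : 24 ≤ Real.sqrt s * η := (div_le_iff₀ hη0).1 hsqrts
  have hsq_s' : η * (Real.sqrt s * Real.sqrt s) = η * s := by rw [hsq_s]
  have f1 : 1.5 * Real.sqrt s ≤ (η/16)*s := by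
    have hint : 0 ≤ (Real.sqrt s * η - 24) * Real.sqrt s :=
      mul_nonneg (by linarith) (Real.sqrt_nonneg s)
    nlinarith [hint, hsq_s']
  have f2 : (1.5:ℝ) ≤ (η/16)*s := by
    have h24'' : 24 ≤ s * η := (div_le_iff₀ hη0).1 h24
    nlinarith [h24'']
  have hm_sq : m^2 = (2-η/2)*s := Real.sq_sqrt (by nlinarith)
  have hm_ub : m ≤ 1.5 * Real.sqrt s := by
    rw [hm_def]
    calc Real.sqrt ((2-η/2)*s) ≤ Real.sqrt (1.5^2*s) := Real.sqrt_le_sqrt (by nlinarith)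
      _ = 1.5 * Real.sqrt s := by
          rw [Real.sqrt_mul (by norm_num) s, Real.sqrt_sq (by norm_num)]
  have hsp : Real.sqrt (2*π) ≤ Real.exp 1 := by
    rw [show Real.exp 1 = Real.sqrt ((Real.exp 1)^2) by rw [Real.sqrt_sq (Real.exp_pos 1).le]]
    apply Real.sqrt_le_sqrt
    nlinarith [Real.pi_lt_d2, Real.exp_one_gt_d9]
  have hsp0 : (0:ℝ) < Real.sqrt (2*π) := Real.sqrt_pos.2 (by positivity)
  have hinv : Real.exp (-1) ≤ (Real.sqrt (2*π))⁻¹ := by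
    rw [Real.exp_neg]
    exact inv_anti₀ hsp0 hsp
  refine le_trans ?_ (gauss_tail_ge hm0)
  apply ENNReal.ofReal_le_ofReal
  calc Real.exp (-(1-η/8)*s) ≤ Real.exp (-1) * Real.exp (-(m+1)^2/2) := by
        rw [← Real.exp_add]
        apply Real.exp_le_exp.2
        nlinarith [hm_ub, f1, f2, hm_sq, hm0]
    _ ≤ (Real.sqrt (2*π))⁻¹ * Real.exp (-(m+1)^2/2) :=
        mul_le_mul_of_nonneg_right hinv (Real.exp_nonneg _)

lemma one_sub_pow_le {p : ℝ} (N : ℕ) (hp0 : 0 < p) (hp1 : p ≤ 1) (hNp : 2 ≤ (N:ℝ) * p) :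
    (1-p)^N ≤ 1/4 := by
  calc (1-p)^N ≤ (Real.exp (-p))^N := by
        apply pow_le_pow_left₀ (by linarith)
        linarith [Real.add_one_le_exp (-p)]
    _ = Real.exp ((N:ℕ) * (-p)) := (Real.exp_nat_mul _ N).symm
    _ ≤ Real.exp (-2) := by
        apply Real.exp_le_exp.2
        nlinarith
    _ ≤ 1/4 := exp_neg_two_le

lemma key_scale {η q s : ℝ} (hη0 : 0 < η) (hη2 : η < 2) (hq4 : 4 ≤ q) (hs0 : 0 < s)
    (hqI : (Real.sqrt (2-η) + 2/Real.sqrt q)^2 ≤ (2 - η/2) * (1 - 1/q)) :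
    Real.sqrt ((2-η)*s) + (2*Real.sqrt s) * Real.sqrt (1/q)
      ≤ Real.sqrt ((2-η/2)*s) * Real.sqrt (1-1/q) := by
  have hq0 : (0:ℝ) < q := by linarith
  have hsq : Real.sqrt (1/q) = 1/Real.sqrt q := by
    rw [one_div, one_div, Real.sqrt_inv]
  have hrs : Real.sqrt ((2-η)*s) = Real.sqrt (2-η) * Real.sqrt s :=
    Real.sqrt_mul (by linarith) s
  have hms : Real.sqrt ((2-η/2)*s) * Real.sqrt (1-1/q)
      = Real.sqrt ((2-η/2)*(1-1/q)) * Real.sqrt s := by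
    rw [Real.sqrt_mul (show (0:ℝ) ≤ 2-η/2 by linarith) s,
      Real.sqrt_mul (show (0:ℝ) ≤ 2-η/2 by linarith) (1-1/q)]
    ring
  have hkey : Real.sqrt (2-η) + 2/Real.sqrt q ≤ Real.sqrt ((2-η/2)*(1-1/q)) := by
    rw [Real.le_sqrt (by positivity) (le_trans (sq_nonneg _) hqI)]
    exact hqI
  rw [hrs, hms, hsq]
  have hss := Real.sqrt_nonneg s
  calc Real.sqrt (2-η) * Real.sqrt s + 2*Real.sqrt s * (1/Real.sqrt q)
      = (Real.sqrt (2-η) + 2/Real.sqrt q) * Real.sqrt s := by ring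
    _ ≤ Real.sqrt ((2-η/2)*(1-1/q)) * Real.sqrt s :=
        mul_le_mul_of_nonneg_right hkey hss

set_option maxHeartbeats 2000000 in
/-- The core estimate for a single sufficiently large `A`. -/
lemma bm_core {Ω : Type*} [MeasurableSpace Ω]
    (P : Measure Ω) [IsProbabilityMeasure P]
    (B : ℝ → Ω → ℝ) (hB : IsStandardBM P B)
    (η : ℝ) (hη0 : 0 < η) (hη2 : η < 2)
    (q : ℝ) (hq4 : 4 ≤ q)
    (hqI : (Real.sqrt (2-η) + 2/Real.sqrt q)^2 ≤ (2 - η/2) * (1 - 1/q))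
    (A : ℝ) (hqA : q + 1 ≤ A)
    (hsS : 2 + 576/η^2 + 24/η + (8/η)*Real.log (4*Real.log q)
      + Real.log (2 + 2*Real.log q) ≤ Real.log (Real.log A)) :
    ENNReal.ofReal (1/2) ≤
        P {ω | Real.sqrt ((2 - η) * Real.log (Real.log A))
          ≤ ⨆ t : Set.Icc (1 : ℝ) (A - 1), B t.1 ω / Real.sqrt t.1} := by
  have hq0 : (0:ℝ) < q := by linarith
  have hq1 : (1:ℝ) < q := by linarith
  have hlogq : 1 ≤ Real.log q := by
    rw [← Real.log_exp 1]
    apply Real.log_le_log (Real.exp_pos 1)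
    linarith [Real.exp_one_lt_d9]
  have hlogq0 : 0 < Real.log q := by linarith
  set s := Real.log (Real.log A) with hs_def
  -- basic positivity facts about the ingredients of hsS
  have hterm1 : 0 ≤ 576/η^2 := by positivity
  have hterm2 : 0 ≤ 24/η := by positivity
  have hterm3 : 0 ≤ Real.log (4*Real.log q) := by
    apply Real.log_nonneg; linarith
  have hterm3' : 0 ≤ (8/η)*Real.log (4*Real.log q) := by positivity
  have hterm4 : 0 ≤ Real.log (2 + 2*Real.log q) := by
    apply Real.log_nonneg; linarith
  have hs2 : 2 ≤ s := by linarith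
  have hs0 : 0 < s := by linarith
  have hsqs1 : 1 ≤ Real.sqrt s := by
    rw [show (1:ℝ) = Real.sqrt 1 by simp]
    exact Real.sqrt_le_sqrt (by linarith)
  have hlogA : 0 < Real.log A := Real.log_pos (by linarith)
  have hxA : Real.exp s = Real.log A := Real.exp_log hlogA
  have hA2 : (2:ℝ) ≤ A := by linarith
  have hA1 : (1:ℝ) ≤ A - 1 := by linarith
  have hA1' : (0:ℝ) < A - 1 := by linarith
  -- key scalars
  set a : ℝ := 2 * Real.sqrt s with ha_def
  set m : ℝ := Real.sqrt ((2 - η/2) * s) with hm_def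
  set L : ℝ := Real.sqrt ((2 - η) * s) with hL_def
  have ha1 : 1 ≤ a := by rw [ha_def]; linarith
  have hm0 : 0 ≤ m := Real.sqrt_nonneg _
  -- N and the time grid
  set N : ℕ := Nat.floor (Real.logb q (A-1)) with hN_def
  set t : ℕ → ℝ := fun k => q ^ k with ht_def
  have ht_pos : ∀ k, 0 < t k := fun k => pow_pos hq0 k
  have ht_nonneg : ∀ k, 0 ≤ t k := fun k => (ht_pos k).le
  have ht_one_le : ∀ k, 1 ≤ t k := fun k => one_le_pow₀ hq1.le
  have ht_mono : Monotone t := fun i j hij => pow_le_pow_right₀ hq1.le hij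
  have ht_lt : ∀ k, t k < t (k+1) := fun k => pow_lt_pow_right₀ hq1 (Nat.lt_succ_self k)
  have hlogb_nonneg : 0 ≤ Real.logb q (A-1) := by
    apply Real.logb_nonneg hq1 hA1
  have hN_le : (N:ℝ) ≤ Real.logb q (A-1) := Nat.floor_le hlogb_nonneg
  have hN_gt : Real.logb q (A-1) - 1 < (N:ℝ) := Nat.sub_one_lt_floor _
  have htN : t N ≤ A - 1 := by
    have h1 : (q:ℝ) ^ (N:ℝ) ≤ q ^ (Real.logb q (A-1)) :=
      Real.rpow_le_rpow_of_exponent_le hq1.le hN_le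
    rw [Real.rpow_logb hq0 (ne_of_gt hq1) hA1'] at h1
    rw [ht_def]
    calc (q:ℝ)^N = q ^ (N:ℝ) := (Real.rpow_natCast q N).symm
      _ ≤ A - 1 := h1
  -- lower bound on N
  have hlogA1 : Real.log A - 1 ≤ Real.log (A-1) := by
    have h1 : A / Real.exp 1 ≤ A - 1 := by
      rw [div_le_iff₀ (Real.exp_pos 1)]
      nlinarith [Real.exp_one_gt_d9, Real.exp_one_lt_d9]
    have h2 := Real.log_le_log (by positivity) h1
    rwa [Real.log_div (by linarith) (Real.exp_ne_zero 1), Real.log_exp] at h2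
  have hxge : 2 + 2 * Real.log q ≤ Real.exp s := by
    rw [← Real.exp_log (show (0:ℝ) < 2 + 2*Real.log q by linarith)]
    exact Real.exp_le_exp.2 (by linarith)
  have hN_lb : Real.exp s / (2 * Real.log q) ≤ (N:ℝ) := by
    have h1 : (Real.exp s - 1) / Real.log q ≤ Real.logb q (A-1) := by
      rw [Real.logb, div_le_div_iff_of_pos_right hlogq0]
      linarith [hxA ▸ hlogA1]
    have hc : (Real.exp s - 1) / Real.log q * Real.log q = Real.exp s - 1 :=
      div_mul_cancel₀ _ (ne_of_gt hlogq0)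
    have expand : (Real.exp s - 1) / Real.log q - 1 - Real.exp s / (2*Real.log q)
        = (Real.exp s - 2 - 2*Real.log q) / (2*Real.log q) := by
      field_simp
      ring
    have h3 : 0 ≤ (Real.exp s - 2 - 2*Real.log q) / (2*Real.log q) :=
      div_nonneg (by linarith) (by positivity)
    linarith
  have hN_ub : (N:ℝ) ≤ Real.exp s := by
    calc (N:ℝ) ≤ Real.logb q (A-1) := hN_le
      _ = Real.log (A-1) / Real.log q := rfl
      _ ≤ Real.log (A-1) := by
          apply div_le_self (Real.log_nonneg hA1) hlogq
      _ ≤ Real.log A := Real.log_le_log (by linarith) (by linarith)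
      _ = Real.exp s := hxA.symm
  -- increments, events and their laws
  set Y : Fin N → Ω → ℝ := fun i ω => B (t (i.1+1)) ω - B (t i.1) ω with hY_def
  set c : Fin N → ℝ := fun i => m * Real.sqrt (t (i.1+1) - t i.1) with hc_def
  have hYmeas : ∀ i, Measurable (Y i) := fun i => (hB.meas _).sub (hB.meas _)
  set τm : ℝ≥0∞ := gaussianReal 0 1 (Ici m) with hτm_def
  set τa : ℝ≥0∞ := gaussianReal 0 1 (Ici a) with hτa_def
  have hvpos : ∀ i : Fin N, (0:ℝ) < t (i.1+1) - t i.1 := fun i => sub_pos.2 (ht_lt i.1)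
  have hYlaw : ∀ i : Fin N,
      Measure.map (Y i) P = gaussianReal 0 ((t (i.1+1) - t i.1).toNNReal) :=
    fun i => hB.incr _ _ (ht_nonneg _) (ht_mono (Nat.le_succ _))
  have hGprob : ∀ i : Fin N, P (Y i ⁻¹' (Ici (c i))) = τm := by
    intro i
    have hvne : ((t (i.1+1) - t i.1).toNNReal) ≠ 0 := by
      simp only [ne_eq, Real.toNNReal_eq_zero, not_le]
      exact hvpos i
    have hsqrt_coe : Real.sqrt (((t (i.1+1) - t i.1).toNNReal : ℝ)) = Real.sqrt (t (i.1+1) - t i.1) := by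
      rw [Real.coe_toNNReal _ (hvpos i).le]
    rw [← Measure.map_apply (hYmeas i) measurableSet_Ici, hYlaw i]
    rw [hτm_def, ← gauss_scale_Ici hvne m]
    congr 2
    rw [hsqrt_coe, hc_def]
  set D : Fin N → Set Ω := fun k =>
    (fun ω => B (t k.1) ω - B 0 ω) ⁻¹' (Iic (-(a * Real.sqrt (t k.1)))) with hD_def
  have hDmeas : ∀ k, MeasurableSet (D k) :=
    fun k => ((hB.meas _).sub (hB.meas 0)) measurableSet_Iic
  have hDprob : ∀ k : Fin N, P (D k) = τa := by
    intro k
    have hlaw : Measure.map (fun ω => B (t k.1) ω - B 0 ω) P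
        = gaussianReal 0 ((t k.1 - 0).toNNReal) := hB.incr 0 (t k.1) le_rfl (ht_nonneg _)
    have hvne : ((t k.1 - 0).toNNReal) ≠ 0 := by
      simp only [ne_eq, Real.toNNReal_eq_zero, not_le, sub_zero]
      exact ht_pos k.1
    have hsqrt_coe : Real.sqrt (((t k.1 - 0).toNNReal : ℝ)) = Real.sqrt (t k.1) := by
      rw [Real.coe_toNNReal _ (by linarith [ht_pos k.1])]
      rw [sub_zero]
    rw [hD_def]
    beta_reduce
    rw [← Measure.map_apply (f := fun ω => B (t k.1) ω - B 0 ω) ((hB.meas _).sub (hB.meas 0)) measurableSet_Iic, hlaw]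
    rw [hτa_def, ← gauss_scale_Iic hvne a]
    congr 3
    rw [hsqrt_coe]
  -- independence and product formula
  set C : Fin N → Set Ω := fun i => Y i ⁻¹' (Iio (c i)) with hC_def
  have hCmeas : ∀ i, MeasurableSet (C i) := fun i => hYmeas i measurableSet_Iio
  have hCprob : ∀ i : Fin N, P (C i) = 1 - τm := by
    intro i
    have hCc : C i = (Y i ⁻¹' (Ici (c i)))ᶜ := by
      rw [hC_def, ← preimage_compl, compl_Ici]
    rw [hCc, measure_compl (hYmeas i measurableSet_Ici) (measure_ne_top _ _),
      measure_univ, hGprob i]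
  have hindep := hB.indep N t ht_nonneg ht_mono
  have hprod : P (⋂ i, C i) = (1 - τm)^N := by
    rw [hindep.meas_iInter (fun i => ⟨Iio (c i), measurableSet_Iio, rfl⟩)]
    rw [Finset.prod_congr rfl (fun i _ => hCprob i), Finset.prod_const,
      Finset.card_univ, Fintype.card_fin]
  -- lower bound on the standard gaussian tail at m
  set p₁ : ℝ := Real.exp (-(1-η/8)*s) with hp₁_def
  have hp₁pos : 0 < p₁ := Real.exp_pos _
  have hp₁le1 : p₁ ≤ 1 := by
    rw [hp₁_def]
    apply Real.exp_le_one_iff.2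
    have : (0:ℝ) ≤ (1-η/8)*s := mul_nonneg (by linarith) hs0.le
    linarith
  have h24s : 24/η ≤ s := by linarith
  have h576s : 576/η^2 ≤ s := by linarith
  have hτm_lb : ENNReal.ofReal p₁ ≤ τm := by
    rw [hτm_def, hm_def, hp₁_def]
    exact tail_m_bound hη0 hη2 hs0 h24s h576s
  -- N * p₁ is at least 2
  have hNp : 2 ≤ (N:ℝ) * p₁ := by
    have hlog4q : (8/η) * Real.log (4*Real.log q) ≤ s := by linarith
    have h2 : 4*Real.log q ≤ Real.exp ((η/8)*s) := by
      rw [← Real.exp_log (show (0:ℝ) < 4*Real.log q by linarith)]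
      apply Real.exp_le_exp.2
      have hone : (η/8)*(8/η) = 1 := by field_simp
      calc Real.log (4*Real.log q) = (η/8)*((8/η)*Real.log (4*Real.log q)) := by
            rw [← mul_assoc, hone, one_mul]
        _ ≤ (η/8)*s := mul_le_mul_of_nonneg_left hlog4q (by positivity)
    have hes : Real.exp ((η/8)*s) = Real.exp s * p₁ := by
      rw [hp₁_def, ← Real.exp_add]
      congr 1
      ring
    have h1 : Real.exp ((η/8)*s) / (2*Real.log q) ≤ (N:ℝ)*p₁ := by
      rw [hes, mul_comm (Real.exp s) p₁, mul_div_assoc]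
      rw [mul_comm ((N:ℝ)) p₁]
      exact mul_le_mul_of_nonneg_left hN_lb hp₁pos.le
    have h3 : 2 ≤ Real.exp ((η/8)*s)/(2*Real.log q) := by
      rw [le_div_iff₀ (by positivity)]
      linarith
    linarith
  -- bound the product
  have hprod_le : (1 - τm)^N ≤ ENNReal.ofReal (1/4) := by
    have h1 : 1 - τm ≤ ENNReal.ofReal (1 - p₁) := by
      refine le_trans (tsub_le_tsub_left hτm_lb 1) ?_
      rw [← ENNReal.ofReal_one, ← ENNReal.ofReal_sub _ hp₁pos.le]
    calc (1-τm)^N ≤ (ENNReal.ofReal (1-p₁))^N := pow_le_pow_left' h1 N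
      _ = ENNReal.ofReal ((1-p₁)^N) := (ENNReal.ofReal_pow (by linarith) N).symm
      _ ≤ ENNReal.ofReal (1/4) :=
          ENNReal.ofReal_le_ofReal (one_sub_pow_le N hp₁pos hp₁le1 hNp)
  -- the union of good events
  set U : Set Ω := ⋃ i : Fin N, Y i ⁻¹' (Ici (c i)) with hU_def
  have hUmeas : MeasurableSet U := MeasurableSet.iUnion (fun i => hYmeas i measurableSet_Ici)
  have hUcompl : Uᶜ = ⋂ i, C i := by
    rw [hU_def, compl_iUnion]
    apply iInter_congr
    intro i
    rw [← preimage_compl, compl_Ici, hC_def]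
  have hU_lb : ENNReal.ofReal (3/4) ≤ P U := by
    have hcompl : P Uᶜ ≤ ENNReal.ofReal (1/4) := by
      rw [hUcompl, hprod]; exact hprod_le
    have hsum : P U + P Uᶜ = 1 := by
      rw [measure_add_measure_compl hUmeas, measure_univ]
    have h2 : 1 - P Uᶜ ≤ P U := by
      rw [tsub_le_iff_right, ← hsum]
    refine le_trans ?_ (le_trans (tsub_le_tsub_left hcompl 1) h2)
    rw [← ENNReal.ofReal_one, ← ENNReal.ofReal_sub _ (by norm_num : (0:ℝ) ≤ 1/4)]
    norm_num
  -- the union of bad events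
  set V : Set Ω := ⋃ k : Fin N, D k with hV_def
  have hτa_ub : τa ≤ ENNReal.ofReal (Real.exp (-(2*s))) := by
    refine le_trans (gauss_tail_le ha1) (le_of_eq ?_)
    congr 1
    have haa : a^2 = 4*s := by
      rw [ha_def, mul_pow, Real.sq_sqrt hs0.le]; norm_num
    rw [haa]; ring
  have hV_ub : P V ≤ ENNReal.ofReal (1/4) := by
    calc P V ≤ ∑ k : Fin N, P (D k) := measure_iUnion_fintype_le P D
      _ = ∑ _k : Fin N, τa := Finset.sum_congr rfl (fun k _ => hDprob k)
      _ = (N : ℝ≥0∞) * τa := by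
          rw [Finset.sum_const, Finset.card_univ, Fintype.card_fin, nsmul_eq_mul]
      _ ≤ (N : ℝ≥0∞) * ENNReal.ofReal (Real.exp (-(2*s))) := mul_le_mul_right hτa_ub _
      _ = ENNReal.ofReal ((N:ℝ) * Real.exp (-(2*s))) := by
          rw [← ENNReal.ofReal_natCast N, ← ENNReal.ofReal_mul (Nat.cast_nonneg N)]
      _ ≤ ENNReal.ofReal (1/4) := by
          apply ENNReal.ofReal_le_ofReal
          have h1 : (N:ℝ) * Real.exp (-(2*s)) ≤ Real.exp s * Real.exp (-(2*s)) :=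
            mul_le_mul_of_nonneg_right hN_ub (Real.exp_nonneg _)
          have h2 : Real.exp s * Real.exp (-(2*s)) = Real.exp (-s) := by
            rw [← Real.exp_add]; congr 1; ring
          have h3 : Real.exp (-s) ≤ Real.exp (-2) := Real.exp_le_exp.2 (by linarith)
          linarith [exp_neg_two_le]
  -- the almost sure event
  set W : Set Ω := {ω | B 0 ω = 0 ∧ ContinuousOn (fun u => B u ω) (Ici 0)} with hW_def
  have hWnull : P Wᶜ = 0 := by
    rw [hW_def, compl_setOf]
    exact ae_iff.mp (hB.start.and hB.cont)
  -- inclusion into the target event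
  have hincl : (U \ V) ∩ W ⊆
      {ω | L ≤ ⨆ t : Set.Icc (1 : ℝ) (A - 1), B t.1 ω / Real.sqrt t.1} := by
    rintro ω ⟨⟨hωU, hωV⟩, hω0, hωc⟩
    obtain ⟨i, hi⟩ := mem_iUnion.1 hωU
    have hYi : m * Real.sqrt (t (i.1+1) - t i.1) ≤ B (t (i.1+1)) ω - B (t i.1) ω := hi
    have hDi : ω ∉ D i := fun h => hωV (mem_iUnion.2 ⟨i, h⟩)
    have hBti : -(a * Real.sqrt (t i.1)) < B (t i.1) ω - B 0 ω := by
      by_contra h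
      push_neg at h
      exact hDi h
    rw [hω0, sub_zero] at hBti
    set T := t (i.1+1) with hT_def
    have hT1 : 1 ≤ T := ht_one_le _
    have hT0 : 0 < T := by linarith
    have htiT : t i.1 = T * (1/q) := by
      show q ^ i.1 = q ^ (i.1+1) * (1/q)
      rw [pow_succ]
      field_simp
    have hdiffT : T - t i.1 = T * (1-1/q) := by
      rw [htiT]; ring
    have hsq1 : Real.sqrt (t i.1) = Real.sqrt T * Real.sqrt (1/q) := by
      rw [htiT, Real.sqrt_mul hT0.le]
    have hsq2 : Real.sqrt (T - t i.1) = Real.sqrt T * Real.sqrt (1-1/q) := by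
      rw [hdiffT, Real.sqrt_mul hT0.le]
    have hks := key_scale hη0 hη2 hq4 hs0 hqI
    have hkey2 : L * Real.sqrt T + a * Real.sqrt (t i.1)
        ≤ m * Real.sqrt (T - t i.1) := by
      rw [hsq1, hsq2]
      have hsT := Real.sqrt_nonneg T
      calc L * Real.sqrt T + a * (Real.sqrt T * Real.sqrt (1/q))
          = (L + a * Real.sqrt (1/q)) * Real.sqrt T := by ring
        _ ≤ (m * Real.sqrt (1-1/q)) * Real.sqrt T := by
            apply mul_le_mul_of_nonneg_right _ hsT
            rw [hL_def, hm_def, ha_def]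
            linarith [hks]
        _ = m * (Real.sqrt T * Real.sqrt (1-1/q)) := by ring
    have hBT : L * Real.sqrt T ≤ B T ω := by
      have h1 : m * Real.sqrt (T - t i.1) ≤ B T ω - B (t i.1) ω := hYi
      linarith [hkey2, hBti, h1]
    have hTmem : T ∈ Set.Icc (1:ℝ) (A-1) := by
      constructor
      · exact hT1
      · have h1 : T ≤ t N := ht_mono i.isLt
        linarith [htN]
    have hcont : ContinuousOn (fun u => B u ω / Real.sqrt u) (Set.Icc 1 (A-1)) := by
      apply ContinuousOn.div
      · exact hωc.mono (fun u hu => le_trans zero_le_one hu.1)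
      · exact Real.continuous_sqrt.continuousOn
      · intro u hu
        exact ne_of_gt (Real.sqrt_pos.2 (lt_of_lt_of_le one_pos hu.1))
    have hbdd : BddAbove (Set.range
        (fun t : Set.Icc (1:ℝ) (A-1) => B t.1 ω / Real.sqrt t.1)) := by
      have himg := (isCompact_Icc.image_of_continuousOn hcont).bddAbove
      rw [Set.image_eq_range] at himg
      exact himg
    have hle : L ≤ B T ω / Real.sqrt T := by
      rw [le_div_iff₀ (Real.sqrt_pos.2 hT0)]
      exact hBT
    exact le_trans hle (le_ciSup hbdd ⟨T, hTmem⟩)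
  -- final measure computation
  have hhalf : ENNReal.ofReal (1/2) ≤ P (U \ V) := by
    have h1 : P U - P V ≤ P (U \ V) := le_measure_diff
    have h2 : ENNReal.ofReal (3/4) - ENNReal.ofReal (1/4) ≤ P U - P V :=
      tsub_le_tsub hU_lb hV_ub
    have h3 : ENNReal.ofReal (1/2) = ENNReal.ofReal (3/4) - ENNReal.ofReal (1/4) := by
      rw [← ENNReal.ofReal_sub _ (by norm_num : (0:ℝ) ≤ 1/4)]
      norm_num
    rw [h3]
    exact le_trans h2 h1
  calc ENNReal.ofReal (1/2) ≤ P (U \ V) := hhalf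
    _ = P ((U \ V) ∩ W) := (measure_inter_conull hWnull).symm
    _ ≤ P {ω | L ≤ ⨆ t : Set.Icc (1 : ℝ) (A - 1), B t.1 ω / Real.sqrt t.1} :=
        measure_mono hincl

theorem bm_sup_ge_iterated_log {Ω : Type*} [MeasurableSpace Ω]
    (P : Measure Ω) [IsProbabilityMeasure P]
    (B : ℝ → Ω → ℝ) (hB : IsStandardBM P B)
    (η : ℝ) (hη0 : 0 < η) (hη2 : η < 2) :
    ∃ c : ℝ, 0 < c ∧ ∃ A₀ : ℝ, Real.exp 1 ≤ A₀ ∧ ∀ A : ℝ, A₀ ≤ A →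
      ENNReal.ofReal c ≤
        P {ω | Real.sqrt ((2 - η) * Real.log (Real.log A))
          ≤ ⨆ t : Set.Icc (1 : ℝ) (A - 1), B t.1 ω / Real.sqrt t.1} := by
  obtain ⟨q, hq4, hqI⟩ := exists_q hη0 hη2
  refine ⟨1/2, by norm_num, ?_⟩
  have hev1 : ∀ᶠ A : ℝ in atTop,
      2 + 576/η^2 + 24/η + (8/η)*Real.log (4*Real.log q)
        + Real.log (2 + 2*Real.log q) ≤ Real.log (Real.log A) :=
    (Real.tendsto_log_atTop.comp Real.tendsto_log_atTop).eventually_ge_atTop _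
  have hev2 : ∀ᶠ A : ℝ in atTop, q + 1 ≤ A := eventually_ge_atTop _
  obtain ⟨a₀, ha₀⟩ := eventually_atTop.mp (hev1.and hev2)
  refine ⟨max (Real.exp 1) a₀, le_max_left _ _, ?_⟩
  intro A hA
  have h := ha₀ A (le_trans (le_max_right _ _) hA)
  exact bm_core P B hB η hη0 hη2 q hq4 hqI A h.2 h.1
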